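/- arXiv:2406.05043 — 4 statements merged into one kernel-verified Lean document; each statement's English description precedes it below -/
import Mathlib

section
/- Let μ > 1 and let p be a classical solution of the mean-field dispersion system with mean μ. Define a(t) = μ − p_1(t), v(t) = exp(∫_0^t e^{−t+s}·a(s) ds), and f_0(t) = ∑_{n=0}^∞ p_n(0)·(1 − e^{−t})^n. Then for every t ≥ 0, v(t) = 1 − f_0(t) + f_0(0)·exp(−∫_0^t log v(s) ds) + μ·∫_0^t v(s)^{e^{−t+s}}·e^{−t+s} ds. -/
/-- The generator of the mean-field dispersion process. -/
noncomputable def dispGen (μ : ℝ) (q : ℕ → ℝ) : ℕ → ℝ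
  | 0 => -(μ - q 1) * q 0
  | 1 => 2 * q 2 - (μ - q 1) * (q 1 - q 0)
  | n + 2 => ((n : ℝ) + 3) * q (n + 3) - ((n : ℝ) + 2) * q (n + 2)
      - (μ - q 1) * (q (n + 2) - q (n + 1))

/-- A classical solution of the mean-field dispersion system with mean `μ`. -/
def IsSol (μ : ℝ) (p : ℝ → ℕ → ℝ) : Prop :=
  (∀ t, 0 ≤ t → ∀ n, 0 ≤ p t n) ∧
  (∀ t, 0 ≤ t → HasSum (fun n => p t n) 1) ∧
  (∀ t, 0 ≤ t → HasSum (fun n : ℕ => (n : ℝ) * p t n) μ) ∧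
  (∀ t, 0 ≤ t → ∀ n, HasDerivWithinAt (fun s => p s n) (dispGen μ (p t) n) (Set.Ici 0) t)

/-- The auxiliary function `v(t) = exp (∫_0^t e^{-t+s} (μ - p_1(s)) ds)`. -/
noncomputable def auxv (μ : ℝ) (p : ℝ → ℕ → ℝ) (t : ℝ) : ℝ :=
  Real.exp (∫ s in (0:ℝ)..t, Real.exp (-t + s) * (μ - p s 1))

/-- `f₀(t) = G(0, 1 - e^{-t})`, the initial generating function evaluated at `1 - e^{-t}`. -/
noncomputable def f0 (p : ℝ → ℕ → ℝ) (t : ℝ) : ℝ :=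
  ∑' n : ℕ, p 0 n * (1 - Real.exp (-t)) ^ n

open Real Set

variable {μ : ℝ} {p : ℝ → ℕ → ℝ}

lemma summable_G (hp : IsSol μ p) {s x : ℝ} (hs : 0 ≤ s) (hx0 : 0 ≤ x) (hx1 : x ≤ 1) :
    Summable (fun n : ℕ => p s n * x ^ n) := by
  refine Summable.of_nonneg_of_le (fun n => mul_nonneg (hp.1 s hs n) (pow_nonneg hx0 n))
    (fun n => ?_) (hp.2.1 s hs).summable
  calc p s n * x ^ n ≤ p s n * 1 :=
        mul_le_mul_of_nonneg_left (pow_le_one₀ hx0 hx1) (hp.1 s hs n)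
    _ = p s n := mul_one _

lemma summable_D (hp : IsSol μ p) {s x : ℝ} (hs : 0 ≤ s) (hx0 : 0 ≤ x) (hx1 : x ≤ 1) :
    Summable (fun n : ℕ => ((n : ℝ) + 1) * p s (n + 1) * x ^ n) := by
  have h0 : Summable (fun n : ℕ => ((n : ℝ) + 1) * p s (n + 1)) := by
    have := (summable_nat_add_iff (f := fun n : ℕ => (n : ℝ) * p s n) 1).2 (hp.2.2.1 s hs).summable
    refine this.congr (fun n => ?_)
    push_cast; ring
  refine Summable.of_nonneg_of_le (fun n => ?_) (fun n => ?_) h0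
  · exact mul_nonneg (mul_nonneg (by positivity) (hp.1 s hs _)) (pow_nonneg hx0 n)
  · calc ((n : ℝ) + 1) * p s (n + 1) * x ^ n ≤ ((n : ℝ) + 1) * p s (n + 1) * 1 :=
        mul_le_mul_of_nonneg_left (pow_le_one₀ hx0 hx1)
          (mul_nonneg (by positivity) (hp.1 s hs _))
    _ = _ := mul_one _

lemma hasSum_deriv (hp : IsSol μ p) {s x : ℝ} (hs : 0 ≤ s) (hx0 : 0 ≤ x) (hx1 : x < 1) :
    HasSum (fun n : ℕ => dispGen μ (p s) n * x ^ n
        + p s n * ((n : ℝ) * x ^ (n - 1) * (-(1 - x))))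
      (-(1 - x) * ((μ - p s 1) * (∑' n : ℕ, p s n * x ^ n) + p s 1)) := by
  have hG : HasSum (fun n : ℕ => p s n * x ^ n) (∑' n : ℕ, p s n * x ^ n) :=
    (summable_G hp hs hx0 hx1.le).hasSum
  set G := ∑' n : ℕ, p s n * x ^ n with hGdef
  have hD : HasSum (fun n : ℕ => ((n : ℝ) + 1) * p s (n + 1) * x ^ n)
      (∑' n : ℕ, ((n : ℝ) + 1) * p s (n + 1) * x ^ n) :=
    (summable_D hp hs hx0 hx1.le).hasSum
  set D := ∑' n : ℕ, ((n : ℝ) + 1) * p s (n + 1) * x ^ n with hDdef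
  have hB : HasSum (fun n : ℕ => (n : ℝ) * p s n * x ^ n) (x * D) := by
    have h2 := hD.mul_left x
    have he : (fun n : ℕ => x * (((n : ℝ) + 1) * p s (n + 1) * x ^ n))
        = fun n : ℕ => (fun m : ℕ => (m : ℝ) * p s m * x ^ m) (n + 1) := by
      funext n; push_cast; ring
    rw [he] at h2
    have h3 := (hasSum_nat_add_iff (f := fun m : ℕ => (m : ℝ) * p s m * x ^ m) 1).1 h2
    simpa using h3
  have hE : HasSum (fun n : ℕ => (if n = 0 then 0 else p s (n - 1)) * x ^ n) (x * G) := by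
    have h2 := hG.mul_left x
    have he : (fun n : ℕ => x * (p s n * x ^ n))
        = fun n : ℕ => (fun m : ℕ => (if m = 0 then 0 else p s (m - 1)) * x ^ m) (n + 1) := by
      funext n; simp only [Nat.succ_ne_zero, if_false, Nat.add_sub_cancel]; ring
    rw [he] at h2
    have h3 := (hasSum_nat_add_iff
      (f := fun m : ℕ => (if m = 0 then 0 else p s (m - 1)) * x ^ m) 1).1 h2
    simpa using h3
  have hN : HasSum (fun n : ℕ => (n : ℝ) * p s n * x ^ (n - 1)) D := by
    have he : (fun n : ℕ => ((n : ℝ) + 1) * p s (n + 1) * x ^ n)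
        = fun n : ℕ => (fun m : ℕ => (m : ℝ) * p s m * x ^ (m - 1)) (n + 1) := by
      funext n; push_cast [Nat.add_sub_cancel]; ring
    have h2 := hD
    rw [he] at h2
    have h3 := (hasSum_nat_add_iff (f := fun m : ℕ => (m : ℝ) * p s m * x ^ (m - 1)) 1).1 h2
    simpa using h3
  have hc0 : HasSum (fun n : ℕ => (if n = 0 then -(p s 1) else 0) * x ^ n) (-(p s 1)) := by
    have he : (fun n : ℕ => (if n = 0 then -(p s 1) else 0) * x ^ n)
        = fun n : ℕ => if n = 0 then -(p s 1) else 0 := by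
      funext n; rcases eq_or_ne n 0 with h | h <;> simp [h]
    rw [he]
    exact hasSum_ite_eq 0 _
  have hc1 : HasSum (fun n : ℕ => (if n = 1 then p s 1 else 0) * x ^ n) (p s 1 * x) := by
    have he : (fun n : ℕ => (if n = 1 then p s 1 else 0) * x ^ n)
        = fun n : ℕ => if n = 1 then p s 1 * x else 0 := by
      funext n; rcases eq_or_ne n 1 with h | h <;> simp [h]
    rw [he]
    exact hasSum_ite_eq 1 _
  have hdec : ∀ n : ℕ, dispGen μ (p s) n
      = ((n : ℝ) + 1) * p s (n + 1) - (n : ℝ) * p s n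
        - (μ - p s 1) * (p s n - (if n = 0 then 0 else p s (n - 1)))
        + (if n = 0 then -(p s 1) else 0) + (if n = 1 then p s 1 else 0) := by
    intro n
    match n with
    | 0 => simp [dispGen]; ring
    | 1 => simp [dispGen]; ring
    | (n + 2) =>
        simp only [dispGen, if_neg (by omega : ¬ n + 2 = 0), if_neg (by omega : ¬ n + 2 = 1),
          Nat.add_sub_cancel]
        push_cast; ring
  have total := ((((hD.sub hB).sub ((hG.sub hE).mul_left (μ - p s 1))).add hc0).add hc1).add
    (hN.mul_left (-(1 - x)))
  convert total using 1
  · rfl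
  · funext n
    rw [hdec n]
    ring
  · ring

lemma p_le_one (hp : IsSol μ p) {s : ℝ} (hs : 0 ≤ s) (n : ℕ) : p s n ≤ 1 :=
  le_hasSum (hp.2.1 s hs) n (fun m _ => hp.1 s hs m)

lemma np_le (hp : IsSol μ p) {s : ℝ} (hs : 0 ≤ s) (n : ℕ) : (n : ℝ) * p s n ≤ μ :=
  le_hasSum (hp.2.2.1 s hs) n (fun m _ => mul_nonneg (Nat.cast_nonneg m) (hp.1 s hs m))

lemma hasDerivAt_p (hp : IsSol μ p) {s : ℝ} (hs : 0 < s) (n : ℕ) :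
    HasDerivAt (fun y => p y n) (dispGen μ (p s) n) s :=
  (hp.2.2.2 s hs.le n).hasDerivAt (Ici_mem_nhds hs)

lemma continuousOn_p (hp : IsSol μ p) (n : ℕ) : ContinuousOn (fun y => p y n) (Ici 0) :=
  fun s hs => (hp.2.2.2 s hs n).continuousWithinAt

lemma abs_dispGen_le (hμ : 1 < μ) (hp : IsSol μ p) {s : ℝ} (hs : 0 ≤ s) (n : ℕ) :
    |dispGen μ (p s) n| ≤ 3 * μ + 2 := by
  have h0 := hp.1 s hs
  have h1 := p_le_one hp hs
  have h2 : ∀ k : ℕ, (k : ℝ) * p s k ≤ μ := np_le hp hs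
  match n with
  | 0 =>
    rw [dispGen, abs_le]
    constructor <;> nlinarith [h0 0, h1 0, h0 1, h1 1]
  | 1 =>
    have := h2 2; push_cast at this
    rw [dispGen, abs_le]
    constructor <;> nlinarith [h0 0, h1 0, h0 1, h1 1, h0 2, h1 2,
      mul_le_mul_of_nonneg_left (by linarith [h0 0, h1 1] : p s 1 - p s 0 ≤ 1) (by linarith [h1 1] : (0:ℝ) ≤ μ - p s 1),
      mul_le_mul_of_nonneg_left (by linarith [h1 0, h0 1] : (-1:ℝ) ≤ p s 1 - p s 0) (by linarith [h1 1] : (0:ℝ) ≤ μ - p s 1)]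
  | n + 2 =>
    have h3 := h2 (n + 3); have h4 := h2 (n + 2)
    push_cast at h3 h4
    have h5 : (0:ℝ) ≤ ((n:ℝ) + 3) * p s (n + 3) := mul_nonneg (by positivity) (h0 _)
    have h6 : (0:ℝ) ≤ ((n:ℝ) + 2) * p s (n + 2) := mul_nonneg (by positivity) (h0 _)
    rw [dispGen, abs_le]
    constructor <;> nlinarith [h0 (n+1), h1 (n+1), h0 (n+2), h1 (n+2), h1 1, h0 1,
      mul_le_mul_of_nonneg_left (by linarith [h0 (n+1), h1 (n+2)] : p s (n+2) - p s (n+1) ≤ 1) (by linarith [h1 1] : (0:ℝ) ≤ μ - p s 1),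
      mul_le_mul_of_nonneg_left (by linarith [h1 (n+1), h0 (n+2)] : (-1:ℝ) ≤ p s (n+2) - p s (n+1)) (by linarith [h1 1] : (0:ℝ) ≤ μ - p s 1)]

noncomputable def fh (p : ℝ → ℕ → ℝ) (t y : ℝ) : ℝ :=
  ∑' n : ℕ, p y n * (1 - Real.exp (-t + y)) ^ n

lemma hasDerivAt_h (hμ : 1 < μ) (hp : IsSol μ p) {t s : ℝ} (hs : s ∈ Ioo 0 t) :
    HasDerivAt (fh p t)
      (-(Real.exp (-t + s)) * ((μ - p s 1) * (∑' n : ℕ, p s n * (1 - Real.exp (-t + s)) ^ n)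
        + p s 1)) s := by
  unfold fh
  obtain ⟨hs0, hst⟩ := hs
  have ht : 0 < t := hs0.trans hst
  set r := 1 - Real.exp (-t) with hrdef
  have he1 : Real.exp (-t) ≤ 1 := by
    calc Real.exp (-t) ≤ Real.exp 0 := Real.exp_le_exp.2 (by linarith)
      _ = 1 := Real.exp_zero
  have hr0 : 0 ≤ r := by simp only [hrdef]; linarith
  have hr1 : r < 1 := by have := Real.exp_pos (-t); simp only [hrdef]; linarith
  have hu : Summable (fun n : ℕ => (3 * μ + 2) * r ^ n + (n : ℝ) * r ^ (n - 1)) := by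
    have g1 : Summable (fun n : ℕ => (3 * μ + 2) * r ^ n) :=
      (summable_geometric_of_lt_one hr0 hr1).mul_left _
    have g2 : Summable (fun n : ℕ => ((n : ℝ) + 1) * r ^ n) := by
      have a1 : Summable (fun n : ℕ => (n : ℝ) ^ 1 * r ^ n) :=
        summable_pow_mul_geometric_of_norm_lt_one 1
          (by rw [Real.norm_eq_abs, abs_of_nonneg hr0]; exact hr1)
      have a2 := summable_geometric_of_lt_one hr0 hr1
      refine (a1.add a2).congr (fun n => ?_)
      ring
    have g3 : Summable (fun n : ℕ => (n : ℝ) * r ^ (n - 1)) := by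
      rw [← summable_nat_add_iff 1]
      refine g2.congr (fun n => ?_)
      push_cast [Nat.add_sub_cancel]
      ring
    exact g1.add g3
  have hX : ∀ y : ℝ, HasDerivAt (fun z => 1 - Real.exp (-t + z)) (-(Real.exp (-t + y))) y := by
    intro y
    have h1 : HasDerivAt (fun z : ℝ => -t + z) 1 y := (hasDerivAt_id y).const_add (-t)
    have h2 : HasDerivAt (fun z : ℝ => Real.exp (-t + z)) (Real.exp (-t + y) * 1) y := h1.exp
    simpa using h2.const_sub 1
  have hg : ∀ (n : ℕ), ∀ y ∈ Ioo (0:ℝ) t,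
      HasDerivAt (fun z => p z n * (1 - Real.exp (-t + z)) ^ n)
        (dispGen μ (p y) n * (1 - Real.exp (-t + y)) ^ n
          + p y n * ((n : ℝ) * (1 - Real.exp (-t + y)) ^ (n - 1) * (-(Real.exp (-t + y))))) y :=
    fun n y hy => (hasDerivAt_p hp hy.1 n).mul ((hX y).pow n)
  have hg' : ∀ (n : ℕ), ∀ y ∈ Ioo (0:ℝ) t,
      ‖dispGen μ (p y) n * (1 - Real.exp (-t + y)) ^ n
        + p y n * ((n : ℝ) * (1 - Real.exp (-t + y)) ^ (n - 1) * (-(Real.exp (-t + y))))‖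
      ≤ (3 * μ + 2) * r ^ n + (n : ℝ) * r ^ (n - 1) := by
    intro n y hy
    set X := 1 - Real.exp (-t + y) with hXdef
    have hy0 := hy.1
    have he : Real.exp (-t + y) ≤ 1 := by
      calc Real.exp (-t + y) ≤ Real.exp 0 := Real.exp_le_exp.2 (by linarith [hy.2])
        _ = 1 := Real.exp_zero
    have heo : 0 < Real.exp (-t + y) := Real.exp_pos _
    have hXr : X ≤ r := by
      have : Real.exp (-t) ≤ Real.exp (-t + y) := Real.exp_le_exp.2 (by linarith)
      simp only [hXdef, hrdef]; linarith
    have hX0 : 0 ≤ X := by simp only [hXdef]; linarith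
    have b1 : |dispGen μ (p y) n * X ^ n| ≤ (3 * μ + 2) * r ^ n := by
      rw [abs_mul, abs_pow, abs_of_nonneg hX0]
      exact mul_le_mul (abs_dispGen_le hμ hp hy0.le n) (pow_le_pow_left₀ hX0 hXr n)
        (by positivity) (by linarith)
    have b2 : |p y n * ((n : ℝ) * X ^ (n - 1) * (-(Real.exp (-t + y))))|
        ≤ (n : ℝ) * r ^ (n - 1) := by
      rw [abs_mul, abs_of_nonneg (hp.1 y hy0.le n), abs_mul, abs_neg,
        abs_of_nonneg heo.le, abs_mul, abs_of_nonneg (Nat.cast_nonneg n : (0:ℝ) ≤ (n:ℝ)),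
        abs_pow, abs_of_nonneg hX0]
      calc p y n * ((n : ℝ) * X ^ (n - 1) * Real.exp (-t + y))
          ≤ 1 * ((n : ℝ) * r ^ (n - 1) * 1) := by
            refine mul_le_mul (p_le_one hp hy0.le n) ?_ ?_ zero_le_one
            · refine mul_le_mul ?_ he heo.le (by positivity)
              exact mul_le_mul_of_nonneg_left (pow_le_pow_left₀ hX0 hXr _) (Nat.cast_nonneg n)
            · positivity
        _ = (n : ℝ) * r ^ (n - 1) := by ring
    rw [Real.norm_eq_abs]
    exact (abs_add_le _ _).trans (add_le_add b1 b2)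
  have hx0' : 0 ≤ 1 - Real.exp (-t + s) := by
    have : Real.exp (-t + s) ≤ 1 := by
      calc Real.exp (-t + s) ≤ Real.exp 0 := Real.exp_le_exp.2 (by linarith)
        _ = 1 := Real.exp_zero
    linarith
  have hx1' : 1 - Real.exp (-t + s) < 1 := by linarith [Real.exp_pos (-t + s)]
  have hsum0 : Summable (fun n : ℕ => p s n * (1 - Real.exp (-t + s)) ^ n) :=
    summable_G hp hs0.le hx0' (by linarith)
  have key := hasDerivAt_tsum_of_isPreconnected hu isOpen_Ioo isPreconnected_Ioo
    hg hg' (⟨hs0, hst⟩ : s ∈ Ioo (0:ℝ) t) hsum0 (⟨hs0, hst⟩ : s ∈ Ioo (0:ℝ) t)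
  convert key using 1
  · rfl
  · rfl
  have hh := hasSum_deriv hp hs0.le hx0' hx1'
  rw [show (1 : ℝ) - (1 - Real.exp (-t + s)) = Real.exp (-t + s) by ring] at hh
  exact hh.tsum_eq.symm

lemma continuousOn_h (hp : IsSol μ p) {t : ℝ} (ht : 0 ≤ t) :
    ContinuousOn (fh p t) (Icc 0 t) := by
  unfold fh
  have he1 : Real.exp (-t) ≤ 1 := by
    calc Real.exp (-t) ≤ Real.exp 0 := Real.exp_le_exp.2 (by linarith)
      _ = 1 := Real.exp_zero
  have hr0 : 0 ≤ 1 - Real.exp (-t) := by linarith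
  have hr1 : 1 - Real.exp (-t) < 1 := by linarith [Real.exp_pos (-t)]
  refine continuousOn_tsum (fun n => ?_) (summable_geometric_of_lt_one hr0 hr1)
    (fun n y hy => ?_)
  · exact ((continuousOn_p hp n).mono (fun y hy => hy.1)).mul
      (((continuous_const.sub (Real.continuous_exp.comp
        (continuous_const.add continuous_id))).pow n).continuousOn)
  · have hy0 := hy.1
    have he : Real.exp (-t + y) ≤ 1 := by
      calc Real.exp (-t + y) ≤ Real.exp 0 := Real.exp_le_exp.2 (by linarith [hy.2])
        _ = 1 := Real.exp_zero
    have hX0 : 0 ≤ 1 - Real.exp (-t + y) := by linarith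
    have hXr : 1 - Real.exp (-t + y) ≤ 1 - Real.exp (-t) := by
      have := Real.exp_le_exp.2 (by linarith [hy.1] : -t ≤ -t + y); linarith
    rw [Real.norm_eq_abs, abs_mul, abs_of_nonneg (hp.1 y hy0 n), abs_pow, abs_of_nonneg hX0]
    calc p y n * (1 - Real.exp (-t + y)) ^ n ≤ 1 * (1 - Real.exp (-t)) ^ n :=
          mul_le_mul (p_le_one hp hy0 n) (pow_le_pow_left₀ hX0 hXr n) (by positivity) zero_le_one
      _ = _ := one_mul _

noncomputable def fJ (μ : ℝ) (p : ℝ → ℕ → ℝ) (y : ℝ) : ℝ :=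
  ∫ u in (0:ℝ)..y, Real.exp u * (μ - p u 1)

noncomputable def fA (μ : ℝ) (p : ℝ → ℕ → ℝ) (y : ℝ) : ℝ :=
  ∫ u in (0:ℝ)..y, (μ - p u 1)

noncomputable def fw (μ : ℝ) (p : ℝ → ℕ → ℝ) (t y : ℝ) : ℝ :=
  Real.exp (Real.exp (-t) * fJ μ p y)

lemma contOn_aJ (hp : IsSol μ p) : ContinuousOn (fun u => Real.exp u * (μ - p u 1)) (Ici 0) :=
  Real.continuous_exp.continuousOn.mul (continuousOn_const.sub (continuousOn_p hp 1))

lemma contOn_aA (hp : IsSol μ p) : ContinuousOn (fun u : ℝ => (μ - p u 1)) (Ici 0) :=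
  continuousOn_const.sub (continuousOn_p hp 1)

lemma contOn_fJ (hp : IsSol μ p) {t : ℝ} (ht : 0 ≤ t) : ContinuousOn (fJ μ p) (Icc 0 t) := by
  have h1 : MeasureTheory.IntegrableOn (fun u => Real.exp u * (μ - p u 1)) (uIcc (0:ℝ) t) := by
    rw [uIcc_of_le ht]
    exact ((contOn_aJ hp).mono Icc_subset_Ici_self).integrableOn_Icc
  have := intervalIntegral.continuousOn_primitive_interval h1
  rwa [uIcc_of_le ht] at this

lemma contOn_fA (hp : IsSol μ p) {t : ℝ} (ht : 0 ≤ t) : ContinuousOn (fA μ p) (Icc 0 t) := by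
  have h1 : MeasureTheory.IntegrableOn (fun u : ℝ => (μ - p u 1)) (uIcc (0:ℝ) t) := by
    rw [uIcc_of_le ht]
    exact ((contOn_aA hp).mono Icc_subset_Ici_self).integrableOn_Icc
  have := intervalIntegral.continuousOn_primitive_interval h1
  rwa [uIcc_of_le ht] at this

lemma hasDerivAt_fJ (hp : IsSol μ p) {y : ℝ} (hy : 0 < y) :
    HasDerivAt (fJ μ p) (Real.exp y * (μ - p y 1)) y := by
  refine intervalIntegral.integral_hasDerivAt_right ?_ ?_ ?_
  · refine ContinuousOn.intervalIntegrable ?_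
    rw [uIcc_of_le hy.le]
    exact (contOn_aJ hp).mono Icc_subset_Ici_self
  · exact ((contOn_aJ hp).mono Ioi_subset_Ici_self).stronglyMeasurableAtFilter isOpen_Ioi y hy
  · exact Real.continuous_exp.continuousAt.mul
      (continuousAt_const.sub (hasDerivAt_p hp hy 1).continuousAt)

lemma hasDerivAt_fA (hp : IsSol μ p) {y : ℝ} (hy : 0 < y) :
    HasDerivAt (fA μ p) (μ - p y 1) y := by
  refine intervalIntegral.integral_hasDerivAt_right ?_ ?_ ?_
  · refine ContinuousOn.intervalIntegrable ?_
    rw [uIcc_of_le hy.le]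
    exact (contOn_aA hp).mono Icc_subset_Ici_self
  · exact ((contOn_aA hp).mono Ioi_subset_Ici_self).stronglyMeasurableAtFilter isOpen_Ioi y hy
  · exact continuousAt_const.sub (hasDerivAt_p hp hy 1).continuousAt

lemma auxv_eq (μ : ℝ) (p : ℝ → ℕ → ℝ) (s : ℝ) :
    auxv μ p s = Real.exp (Real.exp (-s) * fJ μ p s) := by
  unfold auxv fJ
  rw [← intervalIntegral.integral_const_mul]
  congr 1
  refine intervalIntegral.integral_congr (fun u _ => ?_)
  rw [← mul_assoc, ← Real.exp_add]

theorem volterra_integral_equation (μ : ℝ) (hμ : 1 < μ) (p : ℝ → ℕ → ℝ)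
    (hp : IsSol μ p) :
    ∀ t : ℝ, 0 ≤ t →
      auxv μ p t = 1 - f0 p t
        + f0 p 0 * Real.exp (-∫ s in (0:ℝ)..t, Real.log (auxv μ p s))
        + μ * ∫ s in (0:ℝ)..t, (auxv μ p s) ^ Real.exp (-t + s) * Real.exp (-t + s) := by
  intro t ht
  have hvJ : ∀ s, auxv μ p s = Real.exp (Real.exp (-s) * fJ μ p s) := auxv_eq μ p
  have contw : ContinuousOn (fw μ p t) (Icc 0 t) :=
    Real.continuous_exp.comp_continuousOn (continuousOn_const.mul (contOn_fJ hp ht))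
  have conta : ContinuousOn (fun s : ℝ => μ - p s 1) (Icc 0 t) :=
    (contOn_aA hp).mono Icc_subset_Ici_self
  have conte : Continuous (fun s : ℝ => Real.exp (-t + s)) :=
    Real.continuous_exp.comp (continuous_const.add continuous_id)
  have contp1 : ContinuousOn (fun s : ℝ => p s 1) (Icc 0 t) :=
    (continuousOn_p hp 1).mono Icc_subset_Ici_self
  have hwd : ∀ y ∈ Ioo (0:ℝ) t, HasDerivAt (fw μ p t)
      (Real.exp (-t + y) * (μ - p y 1) * fw μ p t y) y := by
    intro y hy
    have h1 := ((hasDerivAt_fJ hp hy.1).const_mul (Real.exp (-t))).exp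
    have h3 : Real.exp (-t) * Real.exp y = Real.exp (-t + y) := (Real.exp_add (-t) y).symm
    have h4 : HasDerivAt (fun z => Real.exp (Real.exp (-t) * fJ μ p z))
        (Real.exp (-t + y) * (μ - p y 1) * Real.exp (Real.exp (-t) * fJ μ p y)) y := by
      convert h1 using 1
      rw [← h3]; ring
    exact h4
  have hw0 : fw μ p t 0 = 1 := by
    unfold fw fJ; rw [intervalIntegral.integral_same, mul_zero, Real.exp_zero]
  have hwt : fw μ p t t = auxv μ p t := (hvJ t).symm
  have hint1 : IntervalIntegrable (fun s => Real.exp (-t + s) * fw μ p t s)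
      MeasureTheory.volume 0 t :=
    (conte.continuousOn.mul contw).intervalIntegrable_of_Icc ht
  have hint3 : IntervalIntegrable (fun s => Real.exp (-t + s) * (μ - p s 1) * fw μ p t s)
      MeasureTheory.volume 0 t :=
    ((conte.continuousOn.mul conta).mul contw).intervalIntegrable_of_Icc ht
  have EW : (∫ s in (0:ℝ)..t, Real.exp (-t + s) * (μ - p s 1) * fw μ p t s)
      = auxv μ p t - 1 := by
    rw [intervalIntegral.integral_eq_sub_of_hasDeriv_right_of_le ht contw
      (fun y hy => (hwd y hy).hasDerivWithinAt) hint3, hw0, hwt]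
  have conth : ContinuousOn (fun y => fh p t y * fw μ p t y) (Icc 0 t) :=
    (continuousOn_h hp ht).mul contw
  have hintP : IntervalIntegrable (fun s => -(Real.exp (-t + s)) * p s 1 * fw μ p t s)
      MeasureTheory.volume 0 t :=
    (((conte.neg.continuousOn).mul contp1).mul contw).intervalIntegrable_of_Icc ht
  have EP : (∫ s in (0:ℝ)..t, -(Real.exp (-t + s)) * p s 1 * fw μ p t s)
      = p t 0 * auxv μ p t - f0 p t := by
    have hPd : ∀ y ∈ Ioo (0:ℝ) t, HasDerivWithinAt (fun z => fh p t z * fw μ p t z)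
        (-(Real.exp (-t + y)) * p y 1 * fw μ p t y) (Ioi y) y := by
      intro y hy
      have hd := (hasDerivAt_h hμ hp hy).mul (hwd y hy)
      have heq : (-(Real.exp (-t + y)) * ((μ - p y 1)
            * (∑' n : ℕ, p y n * (1 - Real.exp (-t + y)) ^ n) + p y 1)) * fw μ p t y
          + fh p t y * (Real.exp (-t + y) * (μ - p y 1) * fw μ p t y)
          = -(Real.exp (-t + y)) * p y 1 * fw μ p t y := by
        unfold fh; ring
      rw [heq] at hd
      exact hd.hasDerivWithinAt
    rw [intervalIntegral.integral_eq_sub_of_hasDeriv_right_of_le ht conth hPd hintP]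
    have hht : fh p t t = p t 0 := by
      unfold fh
      rw [show -t + t = 0 by ring, Real.exp_zero, show (1:ℝ) - 1 = 0 by ring]
      rw [tsum_eq_single 0 (fun b hb => by rw [zero_pow hb, mul_zero])]
      simp
    have hh0 : fh p t 0 = f0 p t := by
      unfold fh f0
      simp only [add_zero]
    rw [hht, hh0, hwt, hw0, mul_one]
  have EQ : p t 0 * Real.exp (fA μ p t) = p 0 0 := by
    have hQc : ContinuousOn (fun y => p y 0 * Real.exp (fA μ p y)) (Icc 0 t) :=
      ((continuousOn_p hp 0).mono Icc_subset_Ici_self).mul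
        (Real.continuous_exp.comp_continuousOn (contOn_fA hp ht))
    have hQd : ∀ y ∈ Ioo (0:ℝ) t, HasDerivWithinAt (fun y => p y 0 * Real.exp (fA μ p y))
        ((0:ℝ)) (Ioi y) y := by
      intro y hy
      have hd := (hasDerivAt_p hp hy.1 0).mul ((hasDerivAt_fA hp hy.1).exp)
      have h0 : dispGen μ (p y) 0 = -(μ - p y 1) * p y 0 := rfl
      have heq : dispGen μ (p y) 0 * Real.exp (fA μ p y)
          + p y 0 * (Real.exp (fA μ p y) * (μ - p y 1)) = 0 := by
        rw [h0]; ring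
      rw [heq] at hd
      exact hd.hasDerivWithinAt
    have h5 := intervalIntegral.integral_eq_sub_of_hasDeriv_right_of_le ht hQc hQd
      intervalIntegrable_const
    rw [intervalIntegral.integral_zero] at h5
    have hA0 : fA μ p 0 = 0 := intervalIntegral.integral_same
    rw [hA0, Real.exp_zero, mul_one] at h5
    linarith
  have contk : ContinuousOn (fun s : ℝ => Real.exp (-s) * fJ μ p s) (Icc 0 t) :=
    ((Real.continuous_exp.comp continuous_neg).continuousOn).mul (contOn_fJ hp ht)
  have ER : (∫ s in (0:ℝ)..t, Real.log (auxv μ p s))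
      = fA μ p t - Real.exp (-t) * fJ μ p t := by
    have hlog : (∫ s in (0:ℝ)..t, Real.log (auxv μ p s))
        = ∫ s in (0:ℝ)..t, Real.exp (-s) * fJ μ p s := by
      refine intervalIntegral.integral_congr (fun s _ => ?_)
      rw [hvJ s, Real.log_exp]
    rw [hlog]
    have contJIoo : ContinuousOn (fJ μ p) (Ioo 0 t) := fun z hz =>
      ((hasDerivAt_fJ hp hz.1).continuousAt).continuousWithinAt
    have hkd : ∀ y ∈ Ioo (0:ℝ) t,
        HasDerivAt (fun z => ∫ s in (0:ℝ)..z, Real.exp (-s) * fJ μ p s)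
          (Real.exp (-y) * fJ μ p y) y := by
      intro y hy
      refine intervalIntegral.integral_hasDerivAt_right ?_ ?_ ?_
      · exact (contk.mono (Icc_subset_Icc le_rfl hy.2.le)).intervalIntegrable_of_Icc hy.1.le
      · exact (((Real.continuous_exp.comp continuous_neg).continuousOn).mul
          contJIoo).stronglyMeasurableAtFilter isOpen_Ioo y hy
      · exact ((Real.continuous_exp.comp continuous_neg).continuousAt).mul
          (hasDerivAt_fJ hp hy.1).continuousAt
    have hRc : ContinuousOn (fun y => (∫ s in (0:ℝ)..y, Real.exp (-s) * fJ μ p s)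
        + Real.exp (-y) * fJ μ p y - fA μ p y) (Icc 0 t) := by
      have h1 : MeasureTheory.IntegrableOn (fun s : ℝ => Real.exp (-s) * fJ μ p s)
          (uIcc (0:ℝ) t) := by
        rw [uIcc_of_le ht]; exact contk.integrableOn_Icc
      have h2 := intervalIntegral.continuousOn_primitive_interval h1
      rw [uIcc_of_le ht] at h2
      exact (h2.add contk).sub (contOn_fA hp ht)
    have hRd : ∀ y ∈ Ioo (0:ℝ) t,
        HasDerivWithinAt (fun y => (∫ s in (0:ℝ)..y, Real.exp (-s) * fJ μ p s)
          + Real.exp (-y) * fJ μ p y - fA μ p y) ((0:ℝ)) (Ioi y) y := by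
      intro y hy
      have hexp : HasDerivAt (fun z : ℝ => Real.exp (-z)) (Real.exp (-y) * (-1)) y :=
        ((hasDerivAt_id y).neg).exp
      have hd := ((hkd y hy).add (hexp.mul (hasDerivAt_fJ hp hy.1))).sub (hasDerivAt_fA hp hy.1)
      have e1 : Real.exp (-y) * Real.exp y = 1 := by rw [← Real.exp_add]; simp
      have heq : Real.exp (-y) * fJ μ p y + (Real.exp (-y) * (-1) * fJ μ p y
          + Real.exp (-y) * (Real.exp y * (μ - p y 1))) - (μ - p y 1) = 0 := by
        linear_combination (μ - p y 1) * e1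
      rw [heq] at hd
      exact hd.hasDerivWithinAt
    have h5 := intervalIntegral.integral_eq_sub_of_hasDeriv_right_of_le ht hRc hRd
      intervalIntegrable_const
    rw [intervalIntegral.integral_zero] at h5
    have hJ0 : fJ μ p 0 = 0 := intervalIntegral.integral_same
    have hA0 : fA μ p 0 = 0 := intervalIntegral.integral_same
    rw [intervalIntegral.integral_same, hJ0, hA0] at h5
    simp at h5
    linarith
  have Itar : (∫ s in (0:ℝ)..t, (auxv μ p s) ^ Real.exp (-t + s) * Real.exp (-t + s))
      = ∫ s in (0:ℝ)..t, Real.exp (-t + s) * fw μ p t s := by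
    refine intervalIntegral.integral_congr (fun s _ => ?_)
    rw [hvJ s, Real.rpow_def_of_pos (Real.exp_pos _), Real.log_exp]
    have h1 : Real.exp (-s) * fJ μ p s * Real.exp (-t + s) = Real.exp (-t) * fJ μ p s := by
      rw [mul_comm (Real.exp (-s)) (fJ μ p s), mul_assoc, ← Real.exp_add,
        show -s + (-t + s) = -t by ring]
      ring
    rw [h1]
    unfold fw; ring
  have hsplit : (∫ s in (0:ℝ)..t, -(Real.exp (-t + s)) * p s 1 * fw μ p t s)
      = (∫ s in (0:ℝ)..t, Real.exp (-t + s) * (μ - p s 1) * fw μ p t s)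
        - μ * (∫ s in (0:ℝ)..t, Real.exp (-t + s) * fw μ p t s) := by
    have hpoint : ∀ s : ℝ, -(Real.exp (-t + s)) * p s 1 * fw μ p t s
        = Real.exp (-t + s) * (μ - p s 1) * fw μ p t s
          - μ * (Real.exp (-t + s) * fw μ p t s) := fun s => by ring
    rw [intervalIntegral.integral_congr (fun s _ => hpoint s),
      intervalIntegral.integral_sub hint3 (hint1.const_mul μ),
      intervalIntegral.integral_const_mul]
  have term2 : f0 p 0 * Real.exp (-(∫ s in (0:ℝ)..t, Real.log (auxv μ p s)))
      = p t 0 * auxv μ p t := by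
    have Ef0 : f0 p 0 = p 0 0 := by
      unfold f0
      rw [show -(0:ℝ) = 0 by ring, Real.exp_zero, show (1:ℝ) - 1 = 0 by ring,
        tsum_eq_single 0 (fun b hb => by rw [zero_pow hb, mul_zero])]
      simp
    rw [ER, Ef0, ← EQ, show -(fA μ p t - Real.exp (-t) * fJ μ p t)
      = -(fA μ p t) + Real.exp (-t) * fJ μ p t by ring, Real.exp_add, hvJ t]
    have e1 : Real.exp (fA μ p t) * Real.exp (-(fA μ p t)) = 1 := by
      rw [← Real.exp_add]; simp
    linear_combination (p t 0 * Real.exp (Real.exp (-t) * fJ μ p t)) * e1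
  rw [Itar, term2]
  have final := EP
  rw [hsplit, EW] at final
  linarith
end

section
/- Let μ > 0 and let v : [0,∞) → ℝ be a continuous function with 1 ≤ v(t) ≤ e^μ for all t ≥ 0. Let t_0 ≥ 0 and let 1 ≤ m ≤ M ≤ e^μ be such that m ≤ v(t) ≤ M for all t ≥ t_0. Then for all t ≥ t_0, φ(m) − μ·e^{μ + t_0}·e^{−t} ≤ μ·∫_0^t v(s)^{e^{−t+s}}·e^{−t+s} ds ≤ φ(M) + μ·e^{μ + t_0}·e^{−t}, where φ : (0,∞) → ℝ is defined by φ(x) = μ·(x−1)/log x for x ≠ 1 and φ(1) = μ. -/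
/-- The function `φ(x) = μ (x-1)/log x` (with `φ(1) = μ`). -/
noncomputable def phi (μ x : ℝ) : ℝ := if x = 1 then μ else μ * (x - 1) / Real.log x

private lemma exp_deriv_aux (t s : ℝ) :
    HasDerivAt (fun s => Real.exp (-t + s)) (Real.exp (-t + s)) s := by
  simpa [Function.comp_def] using (Real.hasDerivAt_exp (-t + s)).comp s ((hasDerivAt_id s).const_add (-t))

private lemma exp_cont_aux (t : ℝ) : Continuous fun s : ℝ => Real.exp (-t + s) :=
  Real.continuous_exp.comp (continuous_const.add continuous_id)

private lemma g_hasDeriv {c : ℝ} (hc : 1 < c) (t s : ℝ) :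
    HasDerivAt (fun s => c ^ Real.exp (-t + s) / Real.log c)
      (c ^ Real.exp (-t + s) * Real.exp (-t + s)) s := by
  have h0 : (0:ℝ) < c := lt_trans one_pos hc
  have hlog : Real.log c ≠ 0 := ne_of_gt (Real.log_pos hc)
  have h2 : HasDerivAt (fun s => c ^ Real.exp (-t + s))
      (c ^ Real.exp (-t + s) * Real.log c * Real.exp (-t + s)) s :=
    (Real.hasStrictDerivAt_const_rpow h0 _).hasDerivAt.comp s (exp_deriv_aux t s)
  have h3 := h2.div_const (Real.log c)
  rw [show c ^ Real.exp (-t + s) * Real.exp (-t + s) = c ^ Real.exp (-t + s) * Real.log c * Real.exp (-t + s) / Real.log c by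
    rw [eq_div_iff hlog]; ring]
  exact h3

private lemma g_cont {c : ℝ} (hc : 0 < c) (t : ℝ) :
    Continuous (fun s => c ^ Real.exp (-t + s) * Real.exp (-t + s)) := by
  exact (continuous_const.rpow (exp_cont_aux t) fun s => Or.inl hc.ne').mul (exp_cont_aux t)

private lemma integral_g {c : ℝ} (hc : 1 < c) (t a b : ℝ) :
    ∫ s in a..b, c ^ Real.exp (-t + s) * Real.exp (-t + s)
      = (c ^ Real.exp (-t + b) - c ^ Real.exp (-t + a)) / Real.log c := by
  have h := intervalIntegral.integral_eq_sub_of_hasDerivAt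
    (f := fun s => c ^ Real.exp (-t + s) / Real.log c)
    (fun s _ => g_hasDeriv hc t s) ((g_cont (lt_trans one_pos hc) t).intervalIntegrable a b)
  rw [h]; ring

private lemma integral_exp_shift (t a b : ℝ) :
    ∫ s in a..b, Real.exp (-t + s) = Real.exp (-t + b) - Real.exp (-t + a) :=
  intervalIntegral.integral_eq_sub_of_hasDerivAt
    (fun s _ => exp_deriv_aux t s) ((exp_cont_aux t).intervalIntegrable a b)

private lemma exp_sub_one_le (x : ℝ) : Real.exp x - 1 ≤ x * Real.exp x := by
  have h := mul_le_mul_of_nonneg_right (Real.add_one_le_exp (-x)) (Real.exp_pos x).le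
  rw [Real.exp_neg, inv_mul_cancel₀ (Real.exp_pos x).ne'] at h
  nlinarith

private lemma key_ineq {c a μ : ℝ} (hc1 : 1 < c) (hcμ : c ≤ Real.exp μ)
    (ha : 0 ≤ a) (ha1 : a ≤ 1) :
    (c ^ a - 1) / Real.log c ≤ Real.exp μ * a := by
  have h0 : (0:ℝ) < c := lt_trans one_pos hc1
  have hlog : 0 < Real.log c := Real.log_pos hc1
  rw [div_le_iff₀ hlog]
  have h1 : c ^ a = Real.exp (a * Real.log c) := by
    rw [Real.rpow_def_of_pos h0, mul_comm]
  have h2 := exp_sub_one_le (a * Real.log c)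
  have h3 : c ^ a ≤ Real.exp μ := by
    calc c ^ a ≤ c ^ (1:ℝ) := Real.rpow_le_rpow_of_exponent_le hc1.le ha1
    _ = c := Real.rpow_one c
    _ ≤ Real.exp μ := hcμ
  have h4 : 0 ≤ a * Real.log c := mul_nonneg ha hlog.le
  nlinarith [Real.exp_pos (a * Real.log c)]

theorem squeeze_nonlinear_integral (μ : ℝ) (hμ : 0 < μ) (v : ℝ → ℝ)
    (hcont : ContinuousOn v (Set.Ici 0))
    (hbound : ∀ t : ℝ, 0 ≤ t → 1 ≤ v t ∧ v t ≤ Real.exp μ)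
    (t0 : ℝ) (ht0 : 0 ≤ t0) (m M : ℝ) (hm : 1 ≤ m) (hmM : m ≤ M) (hM : M ≤ Real.exp μ)
    (hsq : ∀ t : ℝ, t0 ≤ t → m ≤ v t ∧ v t ≤ M) :
    ∀ t : ℝ, t0 ≤ t →
      (phi μ m - μ * Real.exp (μ + t0) * Real.exp (-t) ≤
        μ * ∫ s in (0:ℝ)..t, (v s) ^ Real.exp (-t + s) * Real.exp (-t + s)) ∧
      (μ * ∫ s in (0:ℝ)..t, (v s) ^ Real.exp (-t + s) * Real.exp (-t + s) ≤
        phi μ M + μ * Real.exp (μ + t0) * Real.exp (-t)) := by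
  intro t ht
  have htt : (0:ℝ) ≤ t := le_trans ht0 ht
  set f : ℝ → ℝ := fun s => v s ^ Real.exp (-t + s) * Real.exp (-t + s) with hfdef
  -- continuity of f on [0,t]
  have hvpos : ∀ s ∈ Set.Icc (0:ℝ) t, (0:ℝ) < v s := fun s hs => lt_of_lt_of_le one_pos (hbound s hs.1).1
  have hfc : ContinuousOn f (Set.Icc 0 t) := by
    apply ContinuousOn.mul
    · exact ContinuousOn.rpow (hcont.mono (fun x hx => hx.1)) (exp_cont_aux t).continuousOn
        (fun x hx => Or.inl (hvpos x hx).ne')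
    · exact (exp_cont_aux t).continuousOn
  have hint1 : IntervalIntegrable f MeasureTheory.volume 0 t0 :=
    (hfc.mono (by rw [Set.uIcc_of_le ht0]; exact Set.Icc_subset_Icc_right ht)).intervalIntegrable
  have hint2 : IntervalIntegrable f MeasureTheory.volume t0 t :=
    (hfc.mono (by rw [Set.uIcc_of_le ht]; exact Set.Icc_subset_Icc_left ht0)).intervalIntegrable
  have hsplit : (∫ s in (0:ℝ)..t0, f s) + (∫ s in t0..t, f s) = ∫ s in (0:ℝ)..t, f s :=
    intervalIntegral.integral_add_adjacent_intervals hint1 hint2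
  set a : ℝ := Real.exp (-t + t0) with hadef
  have ha0 : 0 < a := Real.exp_pos _
  have ha1 : a ≤ 1 := Real.exp_le_one_iff.mpr (by linarith)
  set E : ℝ := Real.exp μ with hEdef
  have hE1 : (1:ℝ) ≤ E := Real.one_le_exp hμ.le
  have hEa : Real.exp (μ + t0) * Real.exp (-t) = E * a := by
    rw [hEdef, hadef, ← Real.exp_add, ← Real.exp_add]; ring_nf
  have hEa2 : μ * Real.exp (μ + t0) * Real.exp (-t) = μ * (E * a) := by
    rw [mul_assoc, hEa]
  -- first piece: 0 ≤ I1 ≤ E * (a - exp (-t))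
  have hI1_nonneg : 0 ≤ ∫ s in (0:ℝ)..t0, f s := by
    apply intervalIntegral.integral_nonneg ht0
    intro s hs
    exact mul_nonneg (Real.rpow_nonneg (hvpos s ⟨hs.1, le_trans hs.2 ht⟩).le _) (Real.exp_pos _).le
  have hI1_le : (∫ s in (0:ℝ)..t0, f s) ≤ E * (a - Real.exp (-t)) := by
    have hmono : (∫ s in (0:ℝ)..t0, f s) ≤ ∫ s in (0:ℝ)..t0, E * Real.exp (-t + s) := by
      apply intervalIntegral.integral_mono_on ht0 hint1
      · exact (continuous_const.mul (exp_cont_aux t)).intervalIntegrable _ _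
      · intro s hs
        have hs' : s ∈ Set.Icc (0:ℝ) t := ⟨hs.1, le_trans hs.2 ht⟩
        have h1 : v s ^ Real.exp (-t + s) ≤ E ^ Real.exp (-t + s) :=
          Real.rpow_le_rpow (hvpos s hs').le (hbound s hs.1).2 (Real.exp_pos _).le
        have h2 : E ^ Real.exp (-t + s) ≤ E ^ (1:ℝ) :=
          Real.rpow_le_rpow_of_exponent_le hE1 (Real.exp_le_one_iff.mpr (by linarith [hs.2]))
        rw [Real.rpow_one] at h2
        exact mul_le_mul_of_nonneg_right (le_trans h1 h2) (Real.exp_pos _).le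
    calc (∫ s in (0:ℝ)..t0, f s) ≤ ∫ s in (0:ℝ)..t0, E * Real.exp (-t + s) := hmono
      _ = E * (a - Real.exp (-t)) := by
          rw [intervalIntegral.integral_const_mul, integral_exp_shift]
          simp [hadef]
  -- middle piece bounds
  have hmid_lo : (∫ s in t0..t, m ^ Real.exp (-t + s) * Real.exp (-t + s)) ≤ ∫ s in t0..t, f s := by
    apply intervalIntegral.integral_mono_on ht
      ((g_cont (lt_of_lt_of_le one_pos hm) t).intervalIntegrable _ _) hint2
    intro s hs
    exact mul_le_mul_of_nonneg_right
      (Real.rpow_le_rpow (by linarith) (hsq s hs.1).1 (Real.exp_pos _).le) (Real.exp_pos _).le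
  have hmid_hi : (∫ s in t0..t, f s) ≤ ∫ s in t0..t, M ^ Real.exp (-t + s) * Real.exp (-t + s) := by
    apply intervalIntegral.integral_mono_on ht hint2
      ((g_cont (by linarith) t).intervalIntegrable _ _)
    intro s hs
    have hs' : s ∈ Set.Icc (0:ℝ) t := ⟨le_trans ht0 hs.1, hs.2⟩
    exact mul_le_mul_of_nonneg_right
      (Real.rpow_le_rpow (hvpos s hs').le (hsq s hs.1).2 (Real.exp_pos _).le) (Real.exp_pos _).le
  have hexp_tt : Real.exp (-t + t) = 1 := by rw [neg_add_cancel, Real.exp_zero]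
  -- Lower bound
  constructor
  · -- phi μ m - μ * E * a ≤ μ * I
    rw [hEa2]
    have hLb : phi μ m - μ * (E * a) ≤ μ * ∫ s in t0..t, m ^ Real.exp (-t + s) * Real.exp (-t + s) := by
      rcases eq_or_lt_of_le hm with h1 | h1
      · -- m = 1
        rw [← h1]
        have : (∫ s in t0..t, (1:ℝ) ^ Real.exp (-t + s) * Real.exp (-t + s)) = 1 - a := by
          simp only [Real.one_rpow, one_mul]
          rw [integral_exp_shift, hexp_tt]
        rw [this]
        norm_num [phi]
        nlinarith [mul_nonneg (mul_nonneg hμ.le (sub_nonneg.mpr hE1)) ha0.le]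
      · -- 1 < m
        have hlog : 0 < Real.log m := Real.log_pos h1
        have hmne : m ≠ 1 := ne_of_gt h1
        rw [integral_g h1, hexp_tt, Real.rpow_one]
        simp only [phi, if_neg hmne]
        have hkey : (m ^ a - 1) / Real.log m ≤ E * a :=
          key_ineq h1 (le_trans hmM hM) ha0.le ha1
        have hid : (m - 1) / Real.log m - (m - m ^ a) / Real.log m = (m ^ a - 1) / Real.log m := by
          ring
        have := mul_le_mul_of_nonneg_left hkey hμ.le
        have h2 : μ * (m - 1) / Real.log m = μ * ((m - 1) / Real.log m) := by ring
        rw [h2]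
        nlinarith
    have h3 : μ * (∫ s in t0..t, m ^ Real.exp (-t + s) * Real.exp (-t + s)) ≤
        μ * ∫ s in (0:ℝ)..t, f s := by
      rw [← hsplit]
      have := add_le_add hI1_nonneg hmid_lo
      simp only [zero_add] at this
      exact mul_le_mul_of_nonneg_left this hμ.le
    linarith
  · -- upper
    rw [hEa2]
    have hUb : (∫ s in t0..t, M ^ Real.exp (-t + s) * Real.exp (-t + s)) ≤ (phi μ M) / μ := by
      rcases eq_or_lt_of_le (le_trans hm hmM) with h1 | h1
      · rw [← h1]
        have : (∫ s in t0..t, (1:ℝ) ^ Real.exp (-t + s) * Real.exp (-t + s)) = 1 - a := by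
          simp only [Real.one_rpow, one_mul]
          rw [integral_exp_shift, hexp_tt]
        rw [this]
        norm_num [phi]
        rw [div_self hμ.ne']
        linarith
      · have hlog : 0 < Real.log M := Real.log_pos h1
        have hMne : M ≠ 1 := ne_of_gt h1
        rw [integral_g h1, hexp_tt, Real.rpow_one]
        simp only [phi, if_neg hMne]
        have hMA : (1:ℝ) ≤ M ^ a := by
          have := Real.rpow_le_rpow_of_exponent_le h1.le (le_of_lt ha0 : (0:ℝ) ≤ a)
          rwa [Real.rpow_zero] at this
        have h2 : μ * (M - 1) / Real.log M / μ = (M - 1) / Real.log M := by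
          field_simp
        rw [h2]
        gcongr
    have hItotal : (∫ s in (0:ℝ)..t, f s) ≤ E * (a - Real.exp (-t)) + (phi μ M) / μ := by
      rw [← hsplit]
      exact add_le_add hI1_le (le_trans hmid_hi hUb)
    have h4 : μ * ∫ s in (0:ℝ)..t, f s ≤ μ * (E * (a - Real.exp (-t)) + (phi μ M) / μ) :=
      mul_le_mul_of_nonneg_left hItotal hμ.le
    have h5 : μ * (E * (a - Real.exp (-t)) + (phi μ M) / μ) = μ * E * a - μ * E * Real.exp (-t) + phi μ M := by
      field_simp
    have hEexp : 0 ≤ μ * E * Real.exp (-t) :=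
      mul_nonneg (mul_nonneg hμ.le (by linarith)) (Real.exp_pos _).le
    nlinarith
end

section
/- Let μ > 1, let ν be the unique real number in (μ−1, μ) satisfying (μ − ν)·e^ν = μ, and set L_μ = (μ² − 2μ + μ·e^{1−μ})/(μ−1)². Then: (i) 0 < L_μ < 1; (ii) φ maps the interval [e^{μ−1}, e^μ] into itself; (iii) |φ(x) − φ(y)| ≤ L_μ·|x − y| for all x, y ∈ [e^{μ−1}, e^μ]; (iv) e^ν is the unique fixed point of φ in [e^{μ−1}, e^μ]. -/
lemma phi_hasDerivAt (μ x : ℝ) (hx : 1 < x) :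
    HasDerivAt (phi μ) (μ * (Real.log x - 1 + x⁻¹) / (Real.log x) ^ 2) x := by
  have hx0 : 0 < x := lt_trans one_pos hx
  have hlog : Real.log x ≠ 0 := ne_of_gt (Real.log_pos hx)
  have h1 : HasDerivAt (fun y => μ * (y - 1) / Real.log y)
      ((μ * 1 * Real.log x - μ * (x - 1) * x⁻¹) / (Real.log x) ^ 2) x := by
    exact (((hasDerivAt_id x).sub_const 1).const_mul μ).div
      (Real.hasDerivAt_log (ne_of_gt hx0)) hlog
  have h2 : HasDerivAt (phi μ)
      ((μ * 1 * Real.log x - μ * (x - 1) * x⁻¹) / (Real.log x) ^ 2) x := by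
    apply h1.congr_of_eventuallyEq
    filter_upwards [eventually_ne_nhds (ne_of_gt hx)] with y hy
    simp [phi, hy]
  convert h2 using 1
  field_simp
  ring

lemma q_nonneg (u : ℝ) (hu : 0 ≤ u) : 0 ≤ (u + 2) - (2 - u) * Real.exp u := by
  set q : ℝ → ℝ := fun u => (u + 2) - (2 - u) * Real.exp u with hq
  have hd : ∀ v : ℝ, HasDerivAt q (1 - (1 - v) * Real.exp v) v := by
    intro v
    have h := ((hasDerivAt_id v).add_const 2).sub
        (((hasDerivAt_id v).const_sub 2).mul (Real.hasDerivAt_exp v))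
    simp only [id_eq] at h
    exact h.congr_deriv (by ring)
  have hmono : MonotoneOn q (Set.Ici (0:ℝ)) := by
    apply monotoneOn_of_deriv_nonneg (convex_Ici 0)
      (fun v _ => (hd v).continuousAt.continuousWithinAt)
      (fun v _ => (hd v).differentiableAt.differentiableWithinAt)
    intro v hv
    rw [(hd v).deriv]
    have h1 : (1 - v) * Real.exp v ≤ 1 := by
      have h2 : 1 - v ≤ Real.exp (-v) := by
        have := Real.add_one_le_exp (-v); linarith
      calc (1 - v) * Real.exp v ≤ Real.exp (-v) * Real.exp v :=
            mul_le_mul_of_nonneg_right h2 (Real.exp_pos v).le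
        _ = 1 := by rw [← Real.exp_add]; simp
    linarith
  have h0 : q 0 = 0 := by simp [hq]
  have h := hmono (Set.self_mem_Ici) hu hu
  rw [h0] at h
  exact h

lemma psi_hasDerivAt (u : ℝ) (hu : 0 < u) :
    HasDerivAt (fun v => (v - 1 + Real.exp (-v)) / v ^ 2)
      ((((1 - Real.exp (-u)) * u ^ 2 - (u - 1 + Real.exp (-u)) * (2 * u)) / (u ^ 2) ^ 2)) u := by
  have h1 : HasDerivAt (fun v : ℝ => v - 1 + Real.exp (-v)) (1 - Real.exp (-u)) u := by
    have he : HasDerivAt (fun v : ℝ => Real.exp (-v)) (-Real.exp (-u)) u := by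
      have := (Real.hasDerivAt_exp (-u)).comp u ((hasDerivAt_id u).neg)
      simpa [Function.comp_def] using this
    exact (((hasDerivAt_id u).sub_const 1).add he).congr_deriv (by ring)
  have h2 : HasDerivAt (fun v : ℝ => v ^ 2) (2 * u) u := by
    simpa using hasDerivAt_pow 2 u
  exact h1.div h2 (by positivity)

lemma psi_antitone {a b : ℝ} (ha : 0 < a) :
    AntitoneOn (fun v => (v - 1 + Real.exp (-v)) / v ^ 2) (Set.Icc a b) := by
  apply antitoneOn_of_deriv_nonpos (convex_Icc a b)
  · intro v hv
    have hv0 : 0 < v := lt_of_lt_of_le ha hv.1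
    exact (psi_hasDerivAt v hv0).continuousAt.continuousWithinAt
  · intro v hv
    rw [interior_Icc] at hv
    have hv0 : 0 < v := lt_of_lt_of_le ha hv.1.le
    exact (psi_hasDerivAt v hv0).differentiableAt.differentiableWithinAt
  · intro v hv
    rw [interior_Icc] at hv
    have hv0 : 0 < v := lt_of_lt_of_le ha hv.1.le
    rw [(psi_hasDerivAt v hv0).deriv]
    apply div_nonpos_of_nonpos_of_nonneg _ (by positivity)
    have hq := q_nonneg v hv0.le
    have hepos := Real.exp_pos (-v)
    have key : (1 - Real.exp (-v)) * v ^ 2 - (v - 1 + Real.exp (-v)) * (2 * v)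
        = v * ((2 - v) - (v + 2) * Real.exp (-v)) := by ring
    rw [key]
    apply mul_nonpos_of_nonneg_of_nonpos hv0.le
    -- (2 - v) - (v+2) e^{-v} ≤ 0  ⟺  (2-v) e^v ≤ v+2
    have h2 : ((2 - v) - (v + 2) * Real.exp (-v)) * Real.exp v
        = (2 - v) * Real.exp v - (v + 2) := by
      rw [sub_mul, mul_assoc, ← Real.exp_add]; simp
    nlinarith [Real.exp_pos v, mul_pos (Real.exp_pos (-v)) (Real.exp_pos v),
      Real.exp_neg v]

theorem phi_contraction (μ : ℝ) (hμ : 1 < μ) (ν : ℝ)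
    (hν : ν ∈ Set.Ioo (μ - 1) μ) (hνeq : (μ - ν) * Real.exp ν = μ) :
    (0 < (μ ^ 2 - 2 * μ + μ * Real.exp (1 - μ)) / (μ - 1) ^ 2 ∧
      (μ ^ 2 - 2 * μ + μ * Real.exp (1 - μ)) / (μ - 1) ^ 2 < 1) ∧
    (∀ x ∈ Set.Icc (Real.exp (μ - 1)) (Real.exp μ),
      phi μ x ∈ Set.Icc (Real.exp (μ - 1)) (Real.exp μ)) ∧
    (∀ x ∈ Set.Icc (Real.exp (μ - 1)) (Real.exp μ),
      ∀ y ∈ Set.Icc (Real.exp (μ - 1)) (Real.exp μ),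
        |phi μ x - phi μ y| ≤
          ((μ ^ 2 - 2 * μ + μ * Real.exp (1 - μ)) / (μ - 1) ^ 2) * |x - y|) ∧
    (phi μ (Real.exp ν) = Real.exp ν ∧
      ∀ x ∈ Set.Icc (Real.exp (μ - 1)) (Real.exp μ), phi μ x = x → x = Real.exp ν) := by
  have hμ0 : (0:ℝ) < μ := lt_trans one_pos hμ
  have hμ1 : (0:ℝ) < μ - 1 := by linarith
  set a := Real.exp (μ - 1) with ha_def
  set b := Real.exp μ with hb_def
  set L := (μ ^ 2 - 2 * μ + μ * Real.exp (1 - μ)) / (μ - 1) ^ 2 with hL_def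
  have haμ : μ ≤ a := by
    have := Real.add_one_le_exp (μ - 1); rw [ha_def]; linarith
  have ha1 : 1 < a := lt_of_lt_of_le hμ haμ
  have hab : a ≤ b := by
    rw [ha_def, hb_def]; exact Real.exp_le_exp.mpr (by linarith)
  have hloga : Real.log a = μ - 1 := Real.log_exp _
  have hlogb : Real.log b = μ := Real.log_exp _
  -- (i)
  have hLpos : 0 < L := by
    rw [hL_def]
    apply div_pos _ (by positivity)
    have h := Real.add_one_lt_exp (x := 1 - μ) (by intro h; linarith [h])
    nlinarith
  have hL1 : L < 1 := by
    rw [hL_def, div_lt_one (by positivity)]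
    have hlog : Real.log μ < μ - 1 := Real.log_lt_sub_one_of_pos hμ0 (ne_of_gt hμ)
    have h1 : Real.exp (1 - μ) < Real.exp (-Real.log μ) :=
      Real.exp_lt_exp.mpr (by linarith)
    have h2 : Real.exp (-Real.log μ) = μ⁻¹ := by
      rw [Real.exp_neg, Real.exp_log hμ0]
    have h3 : μ * Real.exp (1 - μ) < μ * μ⁻¹ := by
      rw [← h2]; exact mul_lt_mul_of_pos_left h1 hμ0
    rw [mul_inv_cancel₀ (ne_of_gt hμ0)] at h3
    nlinarith
  -- derivative facts on [a,b]
  have hx1 : ∀ x ∈ Set.Icc a b, 1 < x := fun x hx => lt_of_lt_of_le ha1 hx.1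
  have hlogmem : ∀ x ∈ Set.Icc a b, Real.log x ∈ Set.Icc (μ - 1) μ := by
    intro x hx
    have hx0 : (0:ℝ) < x := lt_trans one_pos (hx1 x hx)
    constructor
    · rw [← hloga]; exact Real.log_le_log (Real.exp_pos _) hx.1
    · rw [← hlogb]; exact Real.log_le_log hx0 hx.2
  set f' : ℝ → ℝ := fun x => μ * (Real.log x - 1 + x⁻¹) / (Real.log x) ^ 2 with hf'_def
  have hder : ∀ x ∈ Set.Icc a b, HasDerivAt (phi μ) (f' x) x :=
    fun x hx => phi_hasDerivAt μ x (hx1 x hx)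
  have hf'_nonneg : ∀ x ∈ Set.Icc a b, 0 ≤ f' x := by
    intro x hx
    have hx0 : (0:ℝ) < x := lt_trans one_pos (hx1 x hx)
    have hinv : -Real.log x + 1 ≤ x⁻¹ := by
      have := Real.add_one_le_exp (-Real.log x)
      rwa [Real.exp_neg, Real.exp_log hx0] at this
    have : 0 ≤ Real.log x - 1 + x⁻¹ := by linarith
    rw [hf'_def]
    positivity
  have hf'_le : ∀ x ∈ Set.Icc a b, f' x ≤ L := by
    intro x hx
    have hx0 : (0:ℝ) < x := lt_trans one_pos (hx1 x hx)
    have hxe : Real.exp (-Real.log x) = x⁻¹ := by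
      rw [Real.exp_neg, Real.exp_log hx0]
    have hpsi := psi_antitone (a := μ - 1) (b := μ) hμ1
      (Set.left_mem_Icc.mpr (by linarith)) (hlogmem x hx) (hlogmem x hx).1
    simp only at hpsi
    have hlx : 0 < Real.log x := Real.log_pos (hx1 x hx)
    have heq : f' x = μ * ((Real.log x - 1 + Real.exp (-Real.log x)) / (Real.log x) ^ 2) := by
      rw [hf'_def, hxe]; ring
    have heq2 : L = μ * ((μ - 1 - 1 + Real.exp (-(μ - 1))) / (μ - 1) ^ 2) := by
      rw [hL_def, show -(μ-1) = 1 - μ by ring]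
      field_simp; ring
    rw [heq, heq2]
    exact mul_le_mul_of_nonneg_left hpsi hμ0.le
  -- Lipschitz (iii)
  have hlip : ∀ x ∈ Set.Icc a b, ∀ y ∈ Set.Icc a b,
      |phi μ x - phi μ y| ≤ L * |x - y| := by
    intro x hx y hy
    have h := Convex.norm_image_sub_le_of_norm_hasDerivWithin_le
      (f := phi μ) (f' := f') (s := Set.Icc a b) (C := L)
      (fun z hz => (hder z hz).hasDerivWithinAt)
      (fun z hz => by rw [Real.norm_eq_abs, abs_of_nonneg (hf'_nonneg z hz)]
                      exact hf'_le z hz)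
      (convex_Icc a b) hy hx
    simpa [Real.norm_eq_abs] using h
  -- monotone
  have hmono : MonotoneOn (phi μ) (Set.Icc a b) := by
    apply monotoneOn_of_deriv_nonneg (convex_Icc a b)
    · exact fun x hx => (hder x hx).continuousAt.continuousWithinAt
    · intro x hx
      rw [interior_Icc] at hx
      exact (hder x (Set.mem_Icc_of_Ioo hx)).differentiableAt.differentiableWithinAt
    · intro x hx
      rw [interior_Icc] at hx
      rw [(hder x (Set.mem_Icc_of_Ioo hx)).deriv]
      exact hf'_nonneg x (Set.mem_Icc_of_Ioo hx)
  -- endpoint values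
  have hphia : phi μ a = μ * (a - 1) / (μ - 1) := by
    rw [phi, if_neg (ne_of_gt ha1), hloga]
  have hphib : phi μ b = b - 1 := by
    have hb1 : (1:ℝ) < b := lt_of_lt_of_le ha1 hab
    rw [phi, if_neg (ne_of_gt hb1), hlogb]
    field_simp
  have hamem : a ∈ Set.Icc a b := Set.left_mem_Icc.mpr hab
  have hbmem : b ∈ Set.Icc a b := Set.right_mem_Icc.mpr hab
  have hphia_ge : a ≤ phi μ a := by
    rw [hphia, le_div_iff₀ hμ1]
    nlinarith
  have hmaps : ∀ x ∈ Set.Icc a b, phi μ x ∈ Set.Icc a b := by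
    intro x hx
    constructor
    · exact le_trans hphia_ge (hmono hamem hx hx.1)
    · refine le_trans (hmono hx hbmem hx.2) ?_
      rw [hphib]; linarith [Real.exp_pos μ]
  -- fixed point
  have hν0 : 0 < ν := lt_trans hμ1 hν.1
  have heν1 : 1 < Real.exp ν := by
    rw [show (1:ℝ) = Real.exp 0 by simp]; exact Real.exp_lt_exp.mpr hν0
  have hfix : phi μ (Real.exp ν) = Real.exp ν := by
    rw [phi, if_neg (ne_of_gt heν1), Real.log_exp, div_eq_iff (ne_of_gt hν0)]
    linear_combination hνeq
  have heνmem : Real.exp ν ∈ Set.Icc a b :=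
    ⟨by rw [ha_def]; exact Real.exp_le_exp.mpr hν.1.le,
     by rw [hb_def]; exact Real.exp_le_exp.mpr hν.2.le⟩
  refine ⟨⟨hLpos, hL1⟩, hmaps, hlip, hfix, ?_⟩
  intro x hx hxfix
  by_contra hne
  have habs : 0 < |x - Real.exp ν| := abs_pos.mpr (sub_ne_zero.mpr hne)
  have h := hlip x hx (Real.exp ν) heνmem
  rw [hxfix, hfix] at h
  nlinarith
end

section
/- Let μ > 1, let ν be the unique real number in (μ−1, μ) satisfying (μ − ν)·e^ν = μ, let c ∈ [0, 1), and set ε_c = (μ·e^{−ν}·(1−c))/(2·(2−c)). Define φ_c(x) = μ·∫_0^∞ x^{e^{−s}}·e^{−(1−c)·s} ds for x ≥ 1. Then ε_c ∈ (0,1), |φ_c(x) − φ_c(y)| ≤ (μ − ε_c)·|x − y| for all x, y ∈ [1, ∞), and |φ_c(x) − φ_c(y)| ≤ (1 − ε_c)·|x − y| for all x, y ∈ [e^ν − ε_c/μ, ∞). -/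
open MeasureTheory

/-- The function `φ_c(x) = μ ∫_0^∞ x^{e^{-s}} e^{-(1-c)s} ds`. -/
noncomputable def phic (μ c x : ℝ) : ℝ :=
  μ * ∫ s in Set.Ioi (0:ℝ), x ^ Real.exp (-s) * Real.exp (-(1 - c) * s)

section helpers
open Set Real

/-- integral of `exp (-b s)` on `(0,∞)` equals `1/b`. -/
lemma integral_exp_neg_mul_Ioi {b : ℝ} (hb : 0 < b) :
    ∫ s in Ioi (0:ℝ), Real.exp (-b * s) = 1 / b := by
  have hderiv : ∀ s ∈ Ici (0:ℝ),
      HasDerivAt (fun s => -Real.exp (-b * s) / b) (Real.exp (-b * s)) s := by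
    intro s _
    have h1 : HasDerivAt (fun s : ℝ => -b * s) (-b) s := by
      simpa using (hasDerivAt_id s).const_mul (-b)
    have h2 := (h1.exp).neg.div_const b
    refine h2.congr_deriv ?_
    field_simp
  have htend : Filter.Tendsto (fun s => -Real.exp (-b * s) / b)
      Filter.atTop (nhds 0) := by
    have : Filter.Tendsto (fun s : ℝ => -b * s) Filter.atTop Filter.atBot :=
      Filter.tendsto_id.const_mul_atTop_of_neg (by linarith)
    have := (Real.tendsto_exp_atBot.comp this).neg.div_const b
    simpa using this
  have := integral_Ioi_of_hasDerivAt_of_tendsto' hderiv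
    (exp_neg_integrableOn_Ioi 0 hb) htend
  rw [this]
  simp only [mul_zero, Real.exp_zero]
  field_simp
  ring

/-- integrability of `exp (-s) * exp (ν * exp (-s))` on `(0,∞)` for `0 ≤ ν`. -/
lemma integrableOn_exp_exp {ν : ℝ} (hν : 0 ≤ ν) :
    IntegrableOn (fun s => Real.exp (-s) * Real.exp (ν * Real.exp (-s))) (Ioi (0:ℝ)) := by
  apply Integrable.mono' (((exp_neg_integrableOn_Ioi 0 one_pos)).const_mul (Real.exp ν))
  · apply Continuous.aestronglyMeasurable
    fun_prop
  · filter_upwards [ae_restrict_mem measurableSet_Ioi] with s hs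
    have hs0 : (0:ℝ) < s := hs
    have h1 : Real.exp (-s) ≤ 1 := by
      rw [Real.exp_le_one_iff]; linarith
    have h2 : ν * Real.exp (-s) ≤ ν := by nlinarith [Real.exp_pos (-s)]
    have := Real.exp_le_exp.2 h2
    rw [Real.norm_eq_abs, abs_of_nonneg (by positivity)]
    calc Real.exp (-s) * Real.exp (ν * Real.exp (-s))
        ≤ Real.exp (-s) * Real.exp ν := by nlinarith [Real.exp_pos (-s)]
      _ = Real.exp ν * Real.exp (-1 * s) := by rw [mul_comm]; norm_num

/-- value of `∫ exp (-s) * exp (ν exp (-s))` on `(0,∞)`. -/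
lemma integral_exp_exp {ν : ℝ} (hν : 0 < ν) :
    ∫ s in Ioi (0:ℝ), Real.exp (-s) * Real.exp (ν * Real.exp (-s))
      = (Real.exp ν - 1) / ν := by
  have hderiv : ∀ s ∈ Ici (0:ℝ),
      HasDerivAt (fun s => -Real.exp (ν * Real.exp (-s)) / ν)
        (Real.exp (-s) * Real.exp (ν * Real.exp (-s))) s := by
    intro s _
    have h0 : HasDerivAt (fun s : ℝ => -s) (-1) s := by
      exact (hasDerivAt_id' s).neg
    have h1 := h0.exp
    have h2 := (h1.const_mul ν).exp
    have h3 := h2.neg.div_const ν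
    refine h3.congr_deriv ?_
    field_simp
  have htend : Filter.Tendsto (fun s => -Real.exp (ν * Real.exp (-s)) / ν)
      Filter.atTop (nhds (-1 / ν)) := by
    have h1 : Filter.Tendsto (fun s : ℝ => -s) Filter.atTop Filter.atBot := by
      simpa using Filter.tendsto_id.const_mul_atTop_of_neg (show (-1:ℝ) < 0 by norm_num)
    have h2 := Real.tendsto_exp_atBot.comp h1
    have h3 : Filter.Tendsto (fun s : ℝ => ν * Real.exp (-s)) Filter.atTop (nhds (ν * 0)) :=
      (h2.const_mul ν)
    rw [mul_zero] at h3
    have h4 := ((Real.continuous_exp.tendsto 0).comp h3).neg.div_const ν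
    simpa using h4
  have := integral_Ioi_of_hasDerivAt_of_tendsto' hderiv (integrableOn_exp_exp hν.le) htend
  rw [this]
  rw [neg_zero, Real.exp_zero, mul_one]
  field_simp
  ring


/-- MVT bound: `|x^a - y^a| ≤ a m^(a-1) |x-y|` for `x,y ≥ m > 0`, `0 < a ≤ 1`. -/
lemma abs_rpow_sub_rpow_le {m x y a : ℝ} (hm : 0 < m) (hx : m ≤ x) (hy : m ≤ y)
    (ha0 : 0 < a) (ha1 : a ≤ 1) :
    |x ^ a - y ^ a| ≤ a * m ^ (a - 1) * |x - y| := by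
  -- reduce to the ordered case
  have key : ∀ u v : ℝ, m ≤ u → m ≤ v → u ≤ v →
      v ^ a - u ^ a ≤ a * m ^ (a - 1) * (v - u) := by
    intro u v hu hv huv
    rcases eq_or_lt_of_le huv with rfl | hlt
    · simp
    · obtain ⟨z, hz, hz2⟩ := exists_hasDerivAt_eq_slope (fun t => t ^ a)
        (fun t => a * t ^ (a - 1)) hlt
        (by
          apply ContinuousOn.rpow_const continuousOn_id
          intro t ht
          have h1 : u ≤ t := ht.1
          exact Or.inl (by simp only [id_eq]; intro h0; rw [h0] at h1; linarith))
        (fun t ht => Real.hasDerivAt_rpow_const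
          (Or.inl (by have h1 : u < t := ht.1; intro h0; rw [h0] at h1; linarith)))
      have hzm : m ≤ z := le_of_lt (lt_of_le_of_lt hu hz.1)
      have hle : z ^ (a - 1) ≤ m ^ (a - 1) :=
        Real.rpow_le_rpow_of_nonpos hm hzm (by linarith)
      have : (v ^ a - u ^ a) / (v - u) ≤ a * m ^ (a - 1) := by
        rw [← hz2]
        have := mul_le_mul_of_nonneg_left hle ha0.le
        linarith
      calc v ^ a - u ^ a = (v ^ a - u ^ a) / (v - u) * (v - u) := by
            rw [div_mul_cancel₀]
            exact sub_ne_zero.2 (ne_of_gt hlt)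
        _ ≤ a * m ^ (a - 1) * (v - u) := by
            apply mul_le_mul_of_nonneg_right this (by linarith)
  rcases le_total x y with h | h
  · have h1 := key x y hx hy h
    have h2 : x ^ a ≤ y ^ a := Real.rpow_le_rpow (by linarith) h ha0.le
    rw [abs_sub_comm, abs_of_nonneg (by linarith), abs_sub_comm, abs_of_nonneg (by linarith)]
    linarith
  · have h1 := key y x hy hx h
    have h2 : y ^ a ≤ x ^ a := Real.rpow_le_rpow (by linarith) h ha0.le
    rw [abs_of_nonneg (by linarith), abs_of_nonneg (by linarith)]
    linarith

/-- integrability of the main integrand. -/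
lemma integrable_main {c x : ℝ} (hc1 : c < 1) (hx : 0 < x) :
    IntegrableOn (fun s => x ^ Real.exp (-s) * Real.exp (-(1 - c) * s)) (Ioi (0:ℝ)) := by
  apply Integrable.mono'
    ((exp_neg_integrableOn_Ioi 0 (show (0:ℝ) < 1 - c by linarith)).const_mul (max x 1))
  · apply Continuous.aestronglyMeasurable
    have h1 : Continuous fun s : ℝ => x ^ Real.exp (-s) := by
      have : (fun s : ℝ => x ^ Real.exp (-s))
          = fun s => Real.exp (Real.log x * Real.exp (-s)) := by
        funext s; rw [Real.rpow_def_of_pos hx]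
      rw [this]; fun_prop
    fun_prop
  · filter_upwards [ae_restrict_mem measurableSet_Ioi] with s hs
    have hs0 : (0:ℝ) < s := hs
    have hb : x ^ Real.exp (-s) ≤ max x 1 := by
      rcases le_total 1 x with h | h
      · calc x ^ Real.exp (-s) ≤ x ^ (1:ℝ) := by
              apply Real.rpow_le_rpow_of_exponent_le h
              rw [Real.exp_le_one_iff]; linarith
          _ = x := Real.rpow_one x
          _ ≤ max x 1 := le_max_left _ _
      · calc x ^ Real.exp (-s) ≤ x ^ (0:ℝ) :=
              Real.rpow_le_rpow_of_exponent_ge hx h (Real.exp_nonneg _)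
          _ = 1 := Real.rpow_zero x
          _ ≤ max x 1 := le_max_right _ _
    rw [Real.norm_eq_abs, abs_of_nonneg (by positivity)]
    calc x ^ Real.exp (-s) * Real.exp (-(1 - c) * s)
        ≤ max x 1 * Real.exp (-(1 - c) * s) := by
          apply mul_le_mul_of_nonneg_right hb (Real.exp_nonneg _)
      _ = max x 1 * Real.exp (-(1 - c) * s) := rfl



/-- generic difference bound for `phic`. -/
lemma phic_diff_le {μ c m x y : ℝ} (hc1 : c < 1) (hμ : 0 < μ) (hm : 0 < m)
    (hx : m ≤ x) (hy : m ≤ y) (g : ℝ → ℝ) (hgint : IntegrableOn g (Ioi (0:ℝ)))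
    (hg : ∀ s ∈ Ioi (0:ℝ),
      Real.exp (-s) * m ^ (Real.exp (-s) - 1) * Real.exp (-(1 - c) * s) ≤ g s) :
    |phic μ c x - phic μ c y| ≤ μ * (∫ s in Ioi (0:ℝ), g s) * |x - y| := by
  have hix := integrable_main hc1 (lt_of_lt_of_le hm hx)
  have hiy := integrable_main hc1 (lt_of_lt_of_le hm hy)
  unfold phic
  rw [← mul_sub, abs_mul, abs_of_pos hμ, ← integral_sub hix hiy, mul_assoc]
  apply mul_le_mul_of_nonneg_left _ hμ.le
  calc |∫ s in Ioi (0:ℝ), (x ^ Real.exp (-s) * Real.exp (-(1 - c) * s)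
          - y ^ Real.exp (-s) * Real.exp (-(1 - c) * s))|
      ≤ ∫ s in Ioi (0:ℝ), |x ^ Real.exp (-s) * Real.exp (-(1 - c) * s)
          - y ^ Real.exp (-s) * Real.exp (-(1 - c) * s)| := by
        simpa [Real.norm_eq_abs] using
          norm_integral_le_integral_norm (μ := volume.restrict (Ioi (0:ℝ)))
            (f := fun s => x ^ Real.exp (-s) * Real.exp (-(1 - c) * s)
              - y ^ Real.exp (-s) * Real.exp (-(1 - c) * s))
    _ ≤ ∫ s in Ioi (0:ℝ), g s * |x - y| := by
        apply setIntegral_mono_on ((hix.sub hiy).abs) (hgint.mul_const _)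
          measurableSet_Ioi
        intro s hs
        simp only [Pi.sub_apply]
        have hs0 : (0:ℝ) < s := hs
        have ha0 : 0 < Real.exp (-s) := Real.exp_pos _
        have ha1 : Real.exp (-s) ≤ 1 := by rw [Real.exp_le_one_iff]; linarith
        have h1 : |x ^ Real.exp (-s) * Real.exp (-(1 - c) * s)
            - y ^ Real.exp (-s) * Real.exp (-(1 - c) * s)|
            = |x ^ Real.exp (-s) - y ^ Real.exp (-s)| * Real.exp (-(1 - c) * s) := by
          rw [← sub_mul, abs_mul, abs_of_pos (Real.exp_pos _)]
        rw [h1]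
        calc |x ^ Real.exp (-s) - y ^ Real.exp (-s)| * Real.exp (-(1 - c) * s)
            ≤ (Real.exp (-s) * m ^ (Real.exp (-s) - 1) * |x - y|)
                * Real.exp (-(1 - c) * s) := by
              apply mul_le_mul_of_nonneg_right
                (abs_rpow_sub_rpow_le hm hx hy ha0 ha1) (Real.exp_nonneg _)
          _ = (Real.exp (-s) * m ^ (Real.exp (-s) - 1) * Real.exp (-(1 - c) * s))
                * |x - y| := by ring
          _ ≤ g s * |x - y| := by
              apply mul_le_mul_of_nonneg_right (hg s hs) (abs_nonneg _)
    _ = (∫ s in Ioi (0:ℝ), g s) * |x - y| := by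
        rw [integral_mul_const]


/-- pointwise bound used for the contraction region. -/
lemma pointwise_bound {ν c m s : ℝ} (hν0 : 0 < ν) (hc1 : c < 1)
    (hm0 : 0 < m) (hmE : m ≤ Real.exp ν) (hs : 0 < s) :
    Real.exp (-s) * m ^ (Real.exp (-s) - 1) * Real.exp (-(1 - c) * s)
      ≤ (1/m) * (Real.exp (-s) * Real.exp (ν * Real.exp (-s)) - Real.exp (-1*s)
          - ν * Real.exp (-2*s) + Real.exp (-(2-c)*s) + ν * Real.exp (-(3-c)*s)) := by
  have e2 : Real.exp (-1*s) = Real.exp (-s) := by norm_num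
  have e3 : Real.exp (-2*s) = Real.exp (-s) * Real.exp (-s) := by
    rw [← Real.exp_add]; congr 1; ring
  have e4 : Real.exp (-(2-c)*s) = Real.exp (-s) * Real.exp (-(1-c)*s) := by
    rw [← Real.exp_add]; congr 1; ring
  have e5 : Real.exp (-(3-c)*s)
      = Real.exp (-s) * Real.exp (-s) * Real.exp (-(1-c)*s) := by
    rw [← Real.exp_add, ← Real.exp_add]; congr 1; ring
  rw [e2, e3, e4, e5]
  set u := Real.exp (-s) with hu
  set w := Real.exp (-(1-c)*s) with hw
  have hu0 : 0 < u := Real.exp_pos _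
  have hu1 : u ≤ 1 := by rw [hu, Real.exp_le_one_iff]; linarith
  have hw0 : 0 < w := Real.exp_pos _
  have hw1 : w ≤ 1 := by rw [hw, Real.exp_le_one_iff]; nlinarith
  have hlm : Real.log m ≤ ν := by
    have h := Real.log_le_log hm0 hmE
    rwa [Real.log_exp] at h
  have hA : m ^ (u - 1) ≤ (1/m) * Real.exp (ν * u) := by
    rw [Real.rpow_def_of_pos hm0]
    have h1m : (1:ℝ)/m = Real.exp (-Real.log m) := by
      rw [Real.exp_neg, Real.exp_log hm0, one_div]
    rw [h1m, ← Real.exp_add, Real.exp_le_exp]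
    nlinarith [mul_nonneg (sub_nonneg.2 hlm) hu0.le]
  have hexp : 1 + ν * u ≤ Real.exp (ν * u) := by
    have := Real.add_one_le_exp (ν * u); linarith
  have hC : 0 ≤ (1 - w) * (u * Real.exp (ν*u) - u - ν*(u*u)) := by
    apply mul_nonneg (by linarith)
    nlinarith
  calc u * m ^ (u-1) * w ≤ u * ((1/m) * Real.exp (ν*u)) * w := by
        apply mul_le_mul_of_nonneg_right _ hw0.le
        exact mul_le_mul_of_nonneg_left hA hu0.le
    _ = (1/m) * (u * Real.exp (ν*u) * w) := by ring
    _ ≤ (1/m) * (u * Real.exp (ν*u) - u - ν*(u*u) + u*w + ν*(u*u)*w) := by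
        apply mul_le_mul_of_nonneg_left _ (by positivity)
        nlinarith [hC]
    _ = (1/m) * (u * Real.exp (ν * u) - u - ν * (u * u) + u * w + ν * (u * u * w)) := by
        ring



theorem phic_lipschitz (μ : ℝ) (hμ : 1 < μ) (ν : ℝ)
    (hν : ν ∈ Set.Ioo (μ - 1) μ) (hνeq : (μ - ν) * Real.exp ν = μ)
    (c : ℝ) (hc : c ∈ Set.Ico (0:ℝ) 1) :
    (0 < μ * Real.exp (-ν) * (1 - c) / (2 * (2 - c)) ∧
      μ * Real.exp (-ν) * (1 - c) / (2 * (2 - c)) < 1) ∧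
    (∀ x y : ℝ, 1 ≤ x → 1 ≤ y →
      |phic μ c x - phic μ c y| ≤
        (μ - μ * Real.exp (-ν) * (1 - c) / (2 * (2 - c))) * |x - y|) ∧
    (∀ x y : ℝ,
      Real.exp ν - (μ * Real.exp (-ν) * (1 - c) / (2 * (2 - c))) / μ ≤ x →
      Real.exp ν - (μ * Real.exp (-ν) * (1 - c) / (2 * (2 - c))) / μ ≤ y →
      |phic μ c x - phic μ c y| ≤
        (1 - μ * Real.exp (-ν) * (1 - c) / (2 * (2 - c))) * |x - y|) := by
  obtain ⟨hν1, hν2⟩ := hν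
  obtain ⟨hc0, hc1⟩ := hc
  have hν0 : 0 < ν := by linarith
  have h2c : (0:ℝ) < 2 - c := by linarith
  have h3c : (0:ℝ) < 3 - c := by linarith
  have h1c : (0:ℝ) < 1 - c := by linarith
  set E := Real.exp ν with hEdef
  have hE1 : 1 < E := by
    rw [hEdef, show (1:ℝ) = Real.exp 0 from Real.exp_zero.symm]
    exact Real.exp_lt_exp.2 hν0
  have hEpos : 0 < E := by linarith
  have hμν : 0 < μ - ν := by linarith
  have hμν1 : μ - ν < 1 := by linarith
  have hme : μ * Real.exp (-ν) = μ - ν := by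
    rw [Real.exp_neg, ← hEdef]
    field_simp
    linarith [hνeq]
  set ε := μ * Real.exp (-ν) * (1 - c) / (2 * (2 - c)) with hεdef
  have hε : ε = (μ - ν) * (1 - c) / (2 * (2 - c)) := by rw [hεdef, hme]
  have hεpos : 0 < ε := by rw [hε]; positivity
  have hεlt : ε < 1 := by
    rw [hε, div_lt_one (by positivity)]
    nlinarith
  refine ⟨⟨hεpos, hεlt⟩, ?_, ?_⟩
  · -- Lipschitz with constant μ - ε on [1, ∞)
    intro x y hx hy
    have hg : ∀ s ∈ Ioi (0:ℝ),
        Real.exp (-s) * (1:ℝ) ^ (Real.exp (-s) - 1) * Real.exp (-(1 - c) * s)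
          ≤ Real.exp (-(2-c)*s) := by
      intro s _
      rw [Real.one_rpow, mul_one, ← Real.exp_add]
      apply le_of_eq
      congr 1; ring
    have hmain := phic_diff_le (μ := μ) (m := 1) hc1 (by linarith) one_pos hx hy _
      (exp_neg_integrableOn_Ioi 0 h2c) hg
    rw [integral_exp_neg_mul_Ioi h2c] at hmain
    refine hmain.trans (mul_le_mul_of_nonneg_right ?_ (abs_nonneg _))
    -- μ * (1/(2-c)) ≤ μ - ε
    rw [hε, ← sub_nonneg]
    have : μ - (μ - ν) * (1 - c) / (2 * (2 - c)) - μ * (1 / (2 - c))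
        = (2*μ*(2-c) - (μ-ν)*(1-c) - 2*μ) / (2*(2-c)) := by
      field_simp
    rw [this]
    apply div_nonneg _ (by positivity)
    nlinarith
  · -- contraction with constant 1 - ε on [E - ε/μ, ∞)
    intro x y hx hy
    set m := E - ε/μ with hmdef
    have hεμ1 : ε/μ < 1 := by
      rw [div_lt_one (by linarith)]; linarith
    have hεμ0 : 0 < ε/μ := by positivity
    have hm0 : 0 < m := by rw [hmdef]; linarith
    have hmE : m ≤ E := by rw [hmdef]; linarith
    set g : ℝ → ℝ := fun s => (1/m) * (Real.exp (-s) * Real.exp (ν * Real.exp (-s))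
      - Real.exp (-1*s) - ν * Real.exp (-2*s) + Real.exp (-(2-c)*s)
      + ν * Real.exp (-(3-c)*s)) with hgdef
    have i1 := integrableOn_exp_exp hν0.le
    have i2 := exp_neg_integrableOn_Ioi 0 one_pos
    have i3 := (exp_neg_integrableOn_Ioi 0 two_pos).const_mul ν
    have i4 := exp_neg_integrableOn_Ioi 0 h2c
    have i5 := (exp_neg_integrableOn_Ioi 0 h3c).const_mul ν
    have hgint : IntegrableOn g (Ioi (0:ℝ)) := by
      rw [hgdef]
      exact (((((i1.sub i2).sub i3).add i4).add i5).const_mul _)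
    have hg : ∀ s ∈ Ioi (0:ℝ),
        Real.exp (-s) * m ^ (Real.exp (-s) - 1) * Real.exp (-(1 - c) * s) ≤ g s :=
      fun s hs => pointwise_bound hν0 hc1 hm0 hmE hs
    have hmain := phic_diff_le (μ := μ) hc1 (by linarith) hm0 hx hy g hgint hg
    have hgval : ∫ s in Ioi (0:ℝ), g s
        = (1/m) * ((E - 1)/ν - 1 - ν * (1/2) + 1/(2-c) + ν * (1/(3-c))) := by
      have j1 : Integrable (fun a : ℝ => Real.exp (-a) * Real.exp (ν * Real.exp (-a))
          - Real.exp (-1*a)) (volume.restrict (Ioi (0:ℝ))) := i1.sub i2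
      have j2 : Integrable (fun a : ℝ => Real.exp (-a) * Real.exp (ν * Real.exp (-a))
          - Real.exp (-1*a) - ν * Real.exp (-2*a)) (volume.restrict (Ioi (0:ℝ))) := j1.sub i3
      have j3 : Integrable (fun a : ℝ => Real.exp (-a) * Real.exp (ν * Real.exp (-a))
          - Real.exp (-1*a) - ν * Real.exp (-2*a) + Real.exp (-(2-c)*a))
          (volume.restrict (Ioi (0:ℝ))) := j2.add i4
      rw [hgdef]
      rw [integral_const_mul]
      rw [integral_add j3 i5,
          integral_add j2 i4,
          integral_sub j1 i3, integral_sub i1 i2,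
          integral_const_mul, integral_const_mul,
          integral_exp_exp hν0,
          integral_exp_neg_mul_Ioi one_pos,
          integral_exp_neg_mul_Ioi two_pos,
          integral_exp_neg_mul_Ioi h2c,
          integral_exp_neg_mul_Ioi h3c, ← hEdef]
      norm_num
    rw [hgval] at hmain
    refine hmain.trans (mul_le_mul_of_nonneg_right ?_ (abs_nonneg _))
    -- μ * ((1/m) * S) ≤ 1 - ε
    set S := (E - 1)/ν - 1 - ν * (1/2) + 1/(2-c) + ν * (1/(3-c)) with hSdef
    have hEν : μ * (E - 1) = ν * E := by linear_combination hνeq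
    have h5 : μ * (E - 1) / ν = E := by
      rw [hEν, mul_comm, mul_div_assoc, div_self hν0.ne', mul_one]
    have hμS : μ * S = E - μ - μ*ν/2 + μ/(2-c) + μ*ν/(3-c) := by
      rw [hSdef]
      have : μ * ((E - 1)/ν - 1 - ν * (1/2) + 1/(2-c) + ν * (1/(3-c)))
          = μ * (E-1) / ν - μ - μ*ν/2 + μ/(2-c) + μ*ν/(3-c) := by ring
      rw [this, h5]
    have hεE : ε * E = μ * (1-c) / (2*(2-c)) := by
      rw [hε]
      field_simp
      linear_combination hνeq
    have hQ1 : μ - μ/(2-c) = μ*(1-c)/(2-c) := by field_simp; ring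
    have hQ2 : μ*ν/2 - μ*ν/(3-c) = μ*ν*(1-c)/(2*(3-c)) := by field_simp; ring
    have hQ3 : (0:ℝ) ≤ μ*ν*(1-c)/(2*(3-c)) := by positivity
    have hP1 : ε/μ ≤ ε := div_le_self hεpos.le (by linarith)
    have hP2 : ε ≤ ε * E := le_mul_of_one_le_right hεpos.le hE1.le
    have hεP : 0 ≤ ε * (ε/μ) := by positivity
    have h2εE : ε * E + ε * E = μ*(1-c)/(2-c) := by
      rw [hεE]; field_simp; ring
    have key : μ * S ≤ (1 - ε) * m := by
      rw [hmdef, hμS]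
      have expand : (1 - ε) * (E - ε/μ) = E - ε*E - ε/μ + ε*(ε/μ) := by ring
      rw [expand]
      linarith
    have : μ * ((1/m) * S) = (μ * S) / m := by ring
    rw [this, div_le_iff₀ hm0]
    exact key

end helpers
end
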